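/- For the fine-grained attribution over {f, x_1, …, x_d} with linear mechanisms f^(k)(x) = ∑_j β_j^(k) x_j, the Shapley value of the mechanism equals the closed-form linear attribution ∑_j ((x_j¹ + x_j²)/2)(β_j² − β_j¹). -/

import Mathlib

open Finset

private lemma shapley_weight_sum {α : Type*} [DecidableEq α] (d : ℕ) (S : Finset α)
    (hS : S.card = d) :
    ∑ A ∈ S.powerset, ((A.card.factorial * (d - A.card).factorial : ℝ) / (d + 1).factorial)
      = 1 := by
  rw [Finset.sum_powerset_apply_card
    (fun k => ((k.factorial * (d - k).factorial : ℝ) / (d + 1).factorial)), hS]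
  have h : ∀ k ∈ range (d + 1),
      (d.choose k) • ((k.factorial * (d - k).factorial : ℝ) / (d + 1).factorial)
        = (d.factorial : ℝ) / (d + 1).factorial := by
    intro k hk
    rw [mem_range, Nat.lt_succ_iff] at hk
    rw [nsmul_eq_mul, mul_div_assoc']
    congr 1
    rw [← Nat.choose_mul_factorial_mul_factorial hk]
    push_cast
    ring
  rw [sum_congr rfl h, sum_const, card_range, nsmul_eq_mul]
  have : ((d + 1).factorial : ℝ) = (d + 1) * d.factorial := by
    rw [Nat.factorial_succ]; push_cast; ring
  rw [this]
  have h1 : (d.factorial : ℝ) ≠ 0 := Nat.cast_ne_zero.2 d.factorial_ne_zero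
  have h2 : ((d : ℝ) + 1) ≠ 0 := by positivity
  field_simp
  exact Nat.cast_succ d

private lemma shapley_weight_half {α : Type*} [DecidableEq α] (d : ℕ) (S : Finset α)
    (hS : S.card = d) (t : α) (ht : t ∈ S) :
    ∑ A ∈ S.powerset with t ∈ A,
      ((A.card.factorial * (d - A.card).factorial : ℝ) / (d + 1).factorial) = 1 / 2 := by
  set w : ℕ → ℝ := fun k => ((k.factorial * (d - k).factorial : ℝ) / (d + 1).factorial) with hw
  have key : ∑ A ∈ S.powerset with t ∈ A, w A.card
      = ∑ A ∈ S.powerset with ¬ t ∈ A, w A.card := by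
    refine sum_nbij' (fun A => S \ A) (fun B => S \ B) ?_ ?_ ?_ ?_ ?_
    · intro A hA
      simp only [mem_filter, mem_powerset] at hA ⊢
      exact ⟨sdiff_subset, fun h => (mem_sdiff.1 h).2 hA.2⟩
    · intro B hB
      simp only [mem_filter, mem_powerset] at hB ⊢
      exact ⟨sdiff_subset, mem_sdiff.2 ⟨ht, hB.2⟩⟩
    · intro A hA
      simp only [mem_filter, mem_powerset] at hA
      exact Finset.sdiff_sdiff_eq_self hA.1
    · intro B hB
      simp only [mem_filter, mem_powerset] at hB
      exact Finset.sdiff_sdiff_eq_self hB.1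
    · intro A hA
      simp only [mem_filter, mem_powerset] at hA
      have hcard : (S \ A).card = d - A.card := by
        rw [card_sdiff_of_subset hA.1, hS]
      have hle : A.card ≤ d := hS ▸ card_le_card hA.1
      simp only [hw, hcard, Nat.sub_sub_self hle]
      ring
  have tot := shapley_weight_sum d S hS
  rw [← sum_filter_add_sum_filter_not S.powerset (fun A => t ∈ A)] at tot
  rw [← key] at tot
  linarith

theorem fine_shapley_linear_mechanism (d : ℕ) (β1 β2 x1 x2 : Fin d → ℝ) :
    let v : Finset (Fin (d + 1)) → ℝ := fun A =>
      ∑ j, (if (0 : Fin (d + 1)) ∈ A then β2 j else β1 j) *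
        (if (j.succ : Fin (d + 1)) ∈ A then x2 j else x1 j)
    let φ : Fin (d + 1) → ℝ := fun w =>
      ∑ A ∈ (Finset.univ \ {w}).powerset,
        ((A.card.factorial * (d - A.card).factorial : ℝ) / (d + 1).factorial) *
          (v (A ∪ {w}) - v A)
    φ 0 = ∑ j, ((x1 j + x2 j) / 2) * (β2 j - β1 j) := by
  intro v φ
  set S : Finset (Fin (d + 1)) := Finset.univ \ {0} with hSdef
  have hS : S.card = d := by
    rw [hSdef, card_sdiff_of_subset (by simp), card_singleton, card_univ, Fintype.card_fin]
    omega
  set w : ℕ → ℝ := fun k => ((k.factorial * (d - k).factorial : ℝ) / (d + 1).factorial) with hw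
  have hdiff : ∀ A ∈ S.powerset, v (A ∪ {0}) - v A
      = ∑ j, (β2 j - β1 j) * (if (j.succ : Fin (d + 1)) ∈ A then x2 j else x1 j) := by
    intro A hA
    rw [mem_powerset] at hA
    have h0 : (0 : Fin (d + 1)) ∉ A := fun h => by
      have := hA h; rw [hSdef, mem_sdiff] at this; simp at this
    simp only [v, ← Finset.sum_sub_distrib]
    refine Finset.sum_congr rfl fun j _ => ?_
    have h0' : (0 : Fin (d + 1)) ∈ A ∪ {0} := by simp
    have hsucc : ((j.succ : Fin (d + 1)) ∈ A ∪ {0}) ↔ ((j.succ : Fin (d + 1)) ∈ A) := by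
      simp [Fin.succ_ne_zero j]
    simp only [if_pos h0', if_neg h0, hsucc]
    split <;> ring
  have step1 : φ 0 = ∑ A ∈ S.powerset, ∑ j,
      w A.card * ((β2 j - β1 j) * (if (j.succ : Fin (d + 1)) ∈ A then x2 j else x1 j)) := by
    refine Finset.sum_congr rfl fun A hA => ?_
    rw [hdiff A hA, Finset.mul_sum]
  rw [step1, Finset.sum_comm]
  refine Finset.sum_congr rfl fun j _ => ?_
  have htS : (j.succ : Fin (d + 1)) ∈ S := by
    rw [hSdef, mem_sdiff]
    exact ⟨mem_univ _, by simp [Fin.succ_ne_zero j]⟩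
  rw [← sum_filter_add_sum_filter_not S.powerset
    (fun A => (j.succ : Fin (d + 1)) ∈ A)]
  have e1 : ∑ A ∈ S.powerset with (j.succ : Fin (d + 1)) ∈ A,
      w A.card * ((β2 j - β1 j) * (if (j.succ : Fin (d + 1)) ∈ A then x2 j else x1 j))
      = ((β2 j - β1 j) * x2 j) * ∑ A ∈ S.powerset with (j.succ : Fin (d + 1)) ∈ A, w A.card := by
    rw [Finset.mul_sum]
    refine Finset.sum_congr rfl fun A hA => ?_
    rw [if_pos (mem_filter.1 hA).2]; ring
  have e2 : ∑ A ∈ S.powerset with ¬ (j.succ : Fin (d + 1)) ∈ A,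
      w A.card * ((β2 j - β1 j) * (if (j.succ : Fin (d + 1)) ∈ A then x2 j else x1 j))
      = ((β2 j - β1 j) * x1 j) * ∑ A ∈ S.powerset with ¬ (j.succ : Fin (d + 1)) ∈ A, w A.card := by
    rw [Finset.mul_sum]
    refine Finset.sum_congr rfl fun A hA => ?_
    rw [if_neg (mem_filter.1 hA).2]; ring
  have half : ∑ A ∈ S.powerset with (j.succ : Fin (d + 1)) ∈ A, w A.card = 1 / 2 :=
    shapley_weight_half d S hS _ htS
  have tot : ∑ A ∈ S.powerset, w A.card = 1 := shapley_weight_sum d S hS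
  rw [← sum_filter_add_sum_filter_not S.powerset
    (fun A => (j.succ : Fin (d + 1)) ∈ A)] at tot
  have nhalf : ∑ A ∈ S.powerset with ¬ (j.succ : Fin (d + 1)) ∈ A, w A.card = 1 / 2 := by
    linarith
  rw [e1, e2, half, nhalf]
  ring
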